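/- Given a finite undirected simple graph G=(V,E), if an orientation Ḡ of G has maximum out-degree Δ and there is a nonempty subset S of vertices such that Δ = ⌈|E(S)|/|S|⌉, then every orientation of G has maximum out-degree at least Δ; that is, Δ is the optimum (minimum possible) maximum out-degree. -/

import Mathlib

open Finset

/-- An orientation of a simple graph `G`: a choice, for each edge `{u,v}` of `G`,
of exactly one of the directed edges `(u,v)`, `(v,u)`. -/
structure GraphOrientation {V : Type*} (G : SimpleGraph V) where
  dir : V → V → Bool
  dir_adj : ∀ u v, dir u v = true → G.Adj u v
  exactly_one : ∀ u v, G.Adj u v → (dir u v = true ↔ ¬ dir v u = true)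

/-- Out-degree of `v` w.r.t. a directed-edge relation `d`. -/
def outDegF {V : Type*} [Fintype V] (d : V → V → Bool) (v : V) : ℕ :=
  (Finset.univ.filter fun w => d v w = true).card

/-- Out-degree of a vertex in an orientation. -/
def GraphOrientation.outDeg {V : Type*} [Fintype V] {G : SimpleGraph V}
    (o : GraphOrientation G) (v : V) : ℕ := outDegF o.dir v

/-- Maximum out-degree `Δ` of an orientation. -/
def GraphOrientation.maxOutDeg {V : Type*} [Fintype V] {G : SimpleGraph V}
    (o : GraphOrientation G) : ℕ := Finset.univ.sup o.outDeg

/-- `|E(S)|`: the number of edges of `G` with both endpoints in `S`. -/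
def edgeCount {V : Type*} [Fintype V] [DecidableEq V] (G : SimpleGraph V)
    [DecidableRel G.Adj] (S : Finset V) : ℕ :=
  (G.edgeFinset.filter fun e => ∀ x ∈ e, x ∈ S).card

/-- A directed path in an orientation: a list of distinct vertices, of length at
least two (i.e. `k ≥ 1` edges), with consecutive vertices joined by directed edges. -/
def IsDirPath {V : Type*} {G : SimpleGraph V} (o : GraphOrientation G) (p : List V) : Prop :=
  p.Nodup ∧ 2 ≤ p.length ∧ List.Chain' (fun a b => o.dir a b = true) p

/-- A directed path from `a` to `b`. -/
def IsPathFrom {V : Type*} {G : SimpleGraph V} (o : GraphOrientation G)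
    (p : List V) (a b : V) : Prop :=
  IsDirPath o p ∧ p.head? = some a ∧ p.getLast? = some b

/-- Invariant 1: there is no improving path between any two vertices, i.e. no directed
path `⟨a,…,b⟩` with `odeg(a) > odeg(b) + 1`. -/
def Invariant1 {V : Type*} [Fintype V] {G : SimpleGraph V} (o : GraphOrientation G) : Prop :=
  ∀ p a b, IsPathFrom o p a b → o.outDeg a ≤ o.outDeg b + 1

/-- Invariant 2: there is no improving path starting at a vertex of maximum out-degree. -/
def Invariant2 {V : Type*} [Fintype V] {G : SimpleGraph V} (o : GraphOrientation G) : Prop :=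
  ∀ p a b, IsPathFrom o p a b → o.outDeg a = o.maxOutDeg → o.outDeg a ≤ o.outDeg b + 1

/-- Flipping the directed path `p`: every directed edge `(v_i, v_{i+1})` of `p`
is replaced by the reversed edge `(v_{i+1}, v_i)`; all other edges are unchanged. -/
def flipDir {V : Type*} [DecidableEq V] (d : V → V → Bool) (p : List V) : V → V → Bool :=
  fun a b => if (a, b) ∈ p.zip p.tail ∨ (b, a) ∈ p.zip p.tail then d b a else d a b

/-- `G + {u,v}`: the graph obtained from `G` by inserting the edge `{u,v}`. -/
def addE {V : Type*} (G : SimpleGraph V) (u v : V) : SimpleGraph V :=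
  G ⊔ SimpleGraph.fromEdgeSet {s(u, v)}

/-- `G − {u,v}`: the graph obtained from `G` by deleting the edge `{u,v}`. -/
def delE {V : Type*} (G : SimpleGraph V) (u v : V) : SimpleGraph V :=
  G.deleteEdges {s(u, v)}

/-- If an orientation `Ḡ` of `G` has maximum out-degree `Δ` and there is a
nonempty vertex set `S` with `Δ = ⌈|E(S)|/|S|⌉`, then every orientation of `G` has
maximum out-degree at least `Δ`; i.e. `Δ` is optimal. -/
theorem maxOutDeg_optimal_of_tight_subset {V : Type*} [Fintype V] [DecidableEq V]
    (G : SimpleGraph V) [DecidableRel G.Adj] (o : GraphOrientation G)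
    (S : Finset V) (hS : S.Nonempty)
    (htight : o.maxOutDeg = edgeCount G S ⌈/⌉ S.card) :
    ∀ o' : GraphOrientation G, o.maxOutDeg ≤ o'.maxOutDeg := by

  intro o'
  rw [htight, ceilDiv_le_iff_le_mul (Nat.pos_of_ne_zero (by simpa using hS.card_pos.ne'))]
  -- key: edgeCount G S ≤ S.card * o'.maxOutDeg
  set P : Finset (V × V) := (S ×ˢ Finset.univ).filter (fun p => o'.dir p.1 p.2 = true) with hP
  have hsub : (G.edgeFinset.filter fun e => ∀ x ∈ e, x ∈ S) ⊆ P.image (fun p => s(p.1, p.2)) := by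
    intro e he
    simp only [Finset.mem_filter, SimpleGraph.mem_edgeFinset] at he
    obtain ⟨he1, he2⟩ := he
    induction e with
    | _ u v =>
      rw [SimpleGraph.mem_edgeSet] at he1
      have hu : u ∈ S := he2 u (by simp)
      have hv : v ∈ S := he2 v (by simp)
      rcases Bool.eq_false_or_eq_true (o'.dir u v) with h | h
      · exact Finset.mem_image.2 ⟨(u, v), Finset.mem_filter.2 ⟨by simp [hu], h⟩, rfl⟩
      · have : o'.dir v u = true := by
          by_contra h2
          exact h2 (((o'.exactly_one v u he1.symm)).2 (by simp [h]))
        exact Finset.mem_image.2 ⟨(v, u), Finset.mem_filter.2 ⟨by simp [hv], this⟩, Sym2.eq_swap⟩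
  have h1 : edgeCount G S ≤ P.card := by
    calc edgeCount G S ≤ (P.image (fun p => s(p.1, p.2))).card := Finset.card_le_card hsub
    _ ≤ P.card := Finset.card_image_le
  have h2 : P.card = ∑ v ∈ S, (P.filter fun p => p.1 = v).card :=
    Finset.card_eq_sum_card_fiberwise (fun p hp => (Finset.mem_product.1 (Finset.mem_filter.1 hp).1).1)
  have h3 : ∀ v ∈ S, (P.filter fun p => p.1 = v).card ≤ o'.maxOutDeg := by
    intro v hv
    have : (P.filter fun p => p.1 = v).card ≤ o'.outDeg v := by
      apply Finset.card_le_card_of_injOn (fun p => p.2)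
      · intro p hp
        simp only [hP, Finset.mem_coe, Finset.mem_filter] at hp
        simp only [outDegF, Finset.mem_coe, Finset.mem_filter, Finset.mem_univ, true_and]
        rw [← hp.2]; exact hp.1.2
      · intro p hp q hq hpq
        have h1 : p.1 = v := (Finset.mem_filter.1 hp).2
        have h2 : q.1 = v := (Finset.mem_filter.1 hq).2
        exact Prod.ext (h1.trans h2.symm) hpq
    exact this.trans (Finset.le_sup (Finset.mem_univ v))
  calc edgeCount G S ≤ P.card := h1
  _ = ∑ v ∈ S, (P.filter fun p => p.1 = v).card := h2
  _ ≤ ∑ v ∈ S, o'.maxOutDeg := Finset.sum_le_sum h3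
  _ = S.card * o'.maxOutDeg := by rw [Finset.sum_const, smul_eq_mul]
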